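/- The Laguerre-type Jacobi matrix with off-diagonal entries α_n = n+1 and diagonal entries β_n = 2n+1 (Laguerre with α = 0) commutes entrywise with both Hankel matrices H^{(1)} with entries (-1)^{m+n} and H^{(2)} with entries (-1)^{m+n}(m+n). -/
import Mathlib

/-- Entry of `J * H` where `J` is the tridiagonal matrix with diagonal `β` and
off-diagonal `α` (`J_{k,k+1} = J_{k+1,k} = α k`). -/
noncomputable def jacobiMulR (α β : ℕ → ℝ) (H : ℕ → ℕ → ℝ) (m n : ℕ) : ℝ :=
  (if m = 0 then 0 else α (m - 1) * H (m - 1) n) + β m * H m n + α m * H (m + 1) n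

/-- Entry of `H * J`. -/
noncomputable def mulJacobiR (α β : ℕ → ℝ) (H : ℕ → ℕ → ℝ) (m n : ℕ) : ℝ :=
  (if n = 0 then 0 else H m (n - 1) * α (n - 1)) + H m n * β n + H m (n + 1) * α n

/-- the Laguerre-type Jacobi matrix with off-diagonal `α_n = n+1` and
diagonal `β_n = 2n+1` commutes entrywise with the Hankel matrices with entries
`(-1)^{m+n}` and `(-1)^{m+n}(m+n)`. -/
theorem stmt11 :
    (∀ m n : ℕ,
      jacobiMulR (fun k => (k : ℝ) + 1) (fun k => 2 * (k : ℝ) + 1)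
        (fun i j => (-1 : ℝ) ^ (i + j)) m n =
      mulJacobiR (fun k => (k : ℝ) + 1) (fun k => 2 * (k : ℝ) + 1)
        (fun i j => (-1 : ℝ) ^ (i + j)) m n) ∧
    (∀ m n : ℕ,
      jacobiMulR (fun k => (k : ℝ) + 1) (fun k => 2 * (k : ℝ) + 1)
        (fun i j => (-1 : ℝ) ^ (i + j) * ((i : ℝ) + (j : ℝ))) m n =
      mulJacobiR (fun k => (k : ℝ) + 1) (fun k => 2 * (k : ℝ) + 1)
        (fun i j => (-1 : ℝ) ^ (i + j) * ((i : ℝ) + (j : ℝ))) m n) := by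
  constructor <;> intro m n <;>
    rcases m with _ | m <;> rcases n with _ | n <;>
    simp [jacobiMulR, mulJacobiR, pow_succ, pow_add] <;> push_cast <;> ring
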